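/- If φ is associative and the bialgebra B_φ = (K⟨Y⟩, conc, 1, Δ_{⧢_φ}, ε) is an enveloping bialgebra (isomorphic to the enveloping algebra of its primitives), then φ is moderate, i.e., for every letter y ∈ Y the set {w ∈ Y^+ : ⟨y, φ(w)⟩ ≠ 0} is finite. -/

import Mathlib

noncomputable section

open Finsupp

attribute [local instance 100] LieRing.ofAssociativeRing

variable {K : Type*} [CommRing K] [Algebra ℚ K]
variable {Y : Type*} [DecidableEq Y]

/-- The word `w ∈ Y*` viewed as a basis element of `K⟨Y⟩`. -/
def word (w : List Y) : List Y →₀ K := Finsupp.single w 1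

/-- Left concatenation by a letter, as a linear endomorphism of `K⟨Y⟩`. -/
def consL (a : Y) : (List Y →₀ K) →ₗ[K] (List Y →₀ K) :=
  Finsupp.lmapDomain K K (List.cons a)

/-- `m` is the `φ`-deformed shuffle product: it satisfies the initialization
`1 ⧢ w = w ⧢ 1 = w` and the recursion
`(au) ⧢ (bv) = a (u ⧢ bv) + b (au ⧢ v) + φ(a,b)(u ⧢ v)`. -/
def IsPhiShuffle (φ : Y → Y → (Y →₀ K))
    (m : (List Y →₀ K) →ₗ[K] (List Y →₀ K) →ₗ[K] (List Y →₀ K)) : Prop :=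
  (∀ w : List Y, m (word []) (word w) = word w) ∧
  (∀ w : List Y, m (word w) (word []) = word w) ∧
  ∀ (a b : Y) (u v : List Y),
    m (word (a :: u)) (word (b :: v)) =
      consL a (m (word u) (word (b :: v))) + consL b (m (word (a :: u)) (word v)) +
      (φ a b).sum fun c k => k • consL c (m (word u) (word v))

/-- Bilinear extension of `φ` to `KY`. -/
def phiExt (φ : Y → Y → (Y →₀ K)) (p q : Y →₀ K) : Y →₀ K :=
  p.sum fun a ka => q.sum fun b kb => (ka * kb) • φ a b

/-- The extension of `φ` to `KY ⊗ KY → KY` is associative. -/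
def PhiAssoc (φ : Y → Y → (Y →₀ K)) : Prop :=
  ∀ a b c : Y, phiExt φ (φ a b) (Finsupp.single c 1) = phiExt φ (Finsupp.single a 1) (φ b c)

/-- The extension of `φ` is commutative. -/
def PhiComm (φ : Y → Y → (Y →₀ K)) : Prop := ∀ a b : Y, φ a b = φ b a

/-- `φ` is dualizable: for every letter `z` only finitely many pairs of letters
have `z` in the support of their `φ`-product. -/
def PhiDualizable (φ : Y → Y → (Y →₀ K)) : Prop :=
  ∀ z : Y, {p : Y × Y | φ p.1 p.2 z ≠ 0}.Finite

/-- Extension of an associative `φ` to nonempty words: `φ(xw) = φ(x, φ(w))`. -/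
def phiWord (φ : Y → Y → (Y →₀ K)) : List Y → (Y →₀ K)
  | [] => 0
  | [x] => Finsupp.single x 1
  | x :: y :: w => (phiWord φ (y :: w)).sum fun b k => k • φ x b

/-- `φ` is moderate: for every letter `y`, only finitely many nonempty words `w`
satisfy `⟨y, φ(w)⟩ ≠ 0`. -/
def PhiModerate (φ : Y → Y → (Y →₀ K)) : Prop :=
  ∀ y : Y, {w : List Y | w ≠ [] ∧ phiWord φ w y ≠ 0}.Finite

/-- Pairing of two polynomials (the words form an orthonormal basis). -/
def pairPP (p q : List Y →₀ K) : K := p.sum fun w a => a * q w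

/-- Pairing `⟨S, p⟩` of a series with a polynomial. -/
def pairPS (S : List Y → K) (p : List Y →₀ K) : K := p.sum fun w a => a * S w

/-- Concatenation product on `K⟨Y⟩`. -/
def concP (p q : List Y →₀ K) : List Y →₀ K :=
  p.sum fun u a => q.sum fun v b => Finsupp.single (u ++ v) (a * b)

/-- Concatenation powers. -/
def concPow (p : List Y →₀ K) : ℕ → (List Y →₀ K)
  | 0 => word []
  | n + 1 => concP p (concPow p n)

/-- Powers with respect to a bilinear product `m`. -/
def mpow (m : (List Y →₀ K) →ₗ[K] (List Y →₀ K) →ₗ[K] (List Y →₀ K))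
    (p : List Y →₀ K) : ℕ → (List Y →₀ K)
  | 0 => word []
  | n + 1 => m p (mpow m p n)

/-- `m`-product of a list of polynomials. -/
def prodM (m : (List Y →₀ K) →ₗ[K] (List Y →₀ K) →ₗ[K] (List Y →₀ K))
    (L : List (List Y →₀ K)) : List Y →₀ K :=
  L.foldr (fun p acc => m p acc) (word [])

/-- The unit series. -/
def oneS : List Y → K := fun w => if w = [] then 1 else 0

/-- Concatenation (Cauchy) product of series. -/
def mulS (S T : List Y → K) : List Y → K := fun w =>
  ∑ i ∈ Finset.range (w.length + 1), S (w.take i) * T (w.drop i)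

/-- Concatenation powers of a series. -/
def powS (S : List Y → K) : ℕ → (List Y → K)
  | 0 => oneS
  | n + 1 => mulS S (powS S n)

/-- Concatenation product of a list of series. -/
def prodS (L : List (List Y → K)) : List Y → K := L.foldr (fun S acc => mulS S acc) oneS

/-- The coproduct `Δ_{⧢_φ}` dual to `m`, on series: `Δ(S)(u,v) = ⟨S, u ⧢_φ v⟩`. -/
def DeltaS (m : (List Y →₀ K) →ₗ[K] (List Y →₀ K) →ₗ[K] (List Y →₀ K))
    (S : List Y → K) : List Y × List Y → K :=
  fun p => pairPS S (m (word p.1) (word p.2))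

/-- `S` is primitive: `Δ_{⧢_φ}(S) = S ⊗ 1 + 1 ⊗ S`. -/
def PrimS (m : (List Y →₀ K) →ₗ[K] (List Y →₀ K) →ₗ[K] (List Y →₀ K))
    (S : List Y → K) : Prop :=
  ∀ u v : List Y, DeltaS m S (u, v) =
    (if v = [] then S u else 0) + (if u = [] then S v else 0)

/-- `S` is group-like: `⟨S,1⟩ = 1` and `Δ_{⧢_φ}(S) = S ⊗ S`. -/
def GroupLikeS (m : (List Y →₀ K) →ₗ[K] (List Y →₀ K) →ₗ[K] (List Y →₀ K))
    (S : List Y → K) : Prop :=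
  S [] = 1 ∧ ∀ u v : List Y, DeltaS m S (u, v) = S u * S v

/-- `Δfn` is the (finitely supported) dual coproduct witnessing dualizability of `m`:
`⟨u ⧢_φ v, w⟩ = ⟨u ⊗ v, Δ(w)⟩`. -/
def IsDualWitness (m : (List Y →₀ K) →ₗ[K] (List Y →₀ K) →ₗ[K] (List Y →₀ K))
    (Δfn : List Y → (List Y × List Y →₀ K)) : Prop :=
  ∀ u v w : List Y, (m (word u) (word v)) w = Δfn w (u, v)

/-- All factorizations of a word into nonempty blocks. -/
def cuts : List Y → List (List (List Y))
  | [] => [[]]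
  | a :: w =>
    (cuts w).flatMap fun parts =>
      match parts with
      | [] => [[[a]]]
      | p :: ps => [[a] :: p :: ps, (a :: p) :: ps]

/-- The extended Eulerian projector `π₁` on series:
`π₁(S) = Σ_{k≥1} ((-1)^{k-1}/k) Σ_{u_1⋯u_k = w, u_i ∈ Y⁺} ⟨S, u_1 ⧢_φ ⋯ ⧢_φ u_k⟩ w`. -/
def piOneS (m : (List Y →₀ K) →ₗ[K] (List Y →₀ K) →ₗ[K] (List Y →₀ K))
    (S : List Y → K) : List Y → K := fun w =>
  ((cuts w).map fun parts =>
    algebraMap ℚ K ((-1) ^ (parts.length - 1) / (parts.length : ℚ)) *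
      pairPS S (prodM m (parts.map word))).sum

/-- Logarithm of a series `S` with `⟨S,1⟩ = 1`. -/
def logS (S : List Y → K) : List Y → K := fun w =>
  ∑ n ∈ Finset.Icc 1 w.length,
    algebraMap ℚ K ((-1) ^ (n - 1) / (n : ℚ)) * powS (fun t => S t - oneS t) n w

/-- Convolution of endomorphisms (valued in series), using a dual coproduct witness. -/
def convT (Δfn : List Y → (List Y × List Y →₀ K))
    (f g : (List Y →₀ K) → (List Y → K)) : (List Y →₀ K) → (List Y → K) :=
  fun P w => P.sum fun t a =>
    a * (Δfn t).sum fun p c => c * mulS (f (word p.1)) (g (word p.2)) w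

/-- The convolution unit `e = 1 ∘ ε`. -/
def eT : (List Y →₀ K) → (List Y → K) := fun P w => if w = [] then P [] else 0

/-- Convolution powers `π₁^{⋆ n}` of the Eulerian projector. -/
def convPowPi (m : (List Y →₀ K) →ₗ[K] (List Y →₀ K) →ₗ[K] (List Y →₀ K))
    (Δfn : List Y → (List Y × List Y →₀ K)) : ℕ → ((List Y →₀ K) → (List Y → K))
  | 0 => eT
  | n + 1 => convT Δfn (fun P => piOneS m fun t => P t) (convPowPi m Δfn n)

/-- Lyndon words: nonempty and lexicographically smaller than each proper suffix. -/
def IsLyndon [LinearOrder Y] (w : List Y) : Prop :=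
  w ≠ [] ∧ ∀ u v : List Y, u ≠ [] → v ≠ [] → w = u ++ v → List.Lex (· < ·) w v

/-- Strictly decreasing lists of Lyndon words with positive exponents,
indexing monomials in Lyndon words. -/
abbrev DecLyn (Y : Type*) [LinearOrder Y] :=
  {s : List (List Y × ℕ) // (∀ p ∈ s, IsLyndon p.1 ∧ 0 < p.2) ∧
    s.Chain' fun a b => List.Lex (· < ·) b.1 a.1}

/-- `⧢_φ`-monomial `l₁^{⧢ i₁} ⧢ ⋯ ⧢ l_k^{⧢ i_k}`. -/
def shMonomial (m : (List Y →₀ K) →ₗ[K] (List Y →₀ K) →ₗ[K] (List Y →₀ K))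
    (s : List (List Y × ℕ)) : List Y →₀ K :=
  s.foldr (fun p acc => m (mpow m (word p.1) p.2) acc) (word [])

/-- Concatenation monomial `Π_{l₁}^{i₁} ⋯ Π_{l_k}^{i_k}` in a family `Pi`. -/
def concMonomial (Pi : List Y → (List Y →₀ K)) (s : List (List Y × ℕ)) : List Y →₀ K :=
  s.foldr (fun p acc => concP (concPow (Pi p.1) p.2) acc) (word [])

/-- The singleton index `l¹ ∈ DecLyn Y` attached to a Lyndon word. -/
def singleIdx [LinearOrder Y] (l : List Y) (hl : IsLyndon l) : DecLyn Y :=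
  ⟨[(l, 1)], ⟨fun p hp => by
      rw [List.mem_singleton] at hp; subst hp; exact ⟨hl, Nat.one_pos⟩,
    List.isChain_singleton _⟩⟩

/-- `(s, r)` is the standard factorization of the Lyndon word `l`:
`l = sr` with `s, r` nonempty and `r` the lexicographically least proper suffix. -/
def StdFact [LinearOrder Y] (l s r : List Y) : Prop :=
  l = s ++ r ∧ s ≠ [] ∧ r ≠ [] ∧
  ∀ s' r' : List Y, l = s' ++ r' → s' ≠ [] → r' ≠ [] → r = r' ∨ List.Lex (· < ·) r r'

/-- `Pi` is the family defined by `Π_y = π₁(y)` on letters and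
`Π_l = [Π_s, Π_r]` for the standard factorization `(s,r)` of a Lyndon word `l`. -/
def IsPiFamily [LinearOrder Y]
    (m : (List Y →₀ K) →ₗ[K] (List Y →₀ K) →ₗ[K] (List Y →₀ K))
    (Pi : List Y → (List Y →₀ K)) : Prop :=
  (∀ y : Y, ∀ w : List Y, Pi [y] w = piOneS m (fun t => (word [y] : List Y →₀ K) t) w) ∧
  ∀ l s r : List Y, IsLyndon l → StdFact l s r →
    Pi l = concP (Pi s) (Pi r) - concP (Pi r) (Pi s)

/-- Primitivity for `Δ_{⧢_φ}` of an element of the concatenation algebra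
`K⟨Y⟩ = MonoidAlgebra K (FreeMonoid Y)`, expressed through the duality
`⟨Δ_{⧢_φ}(p), u ⊗ v⟩ = ⟨p, u ⧢_φ v⟩`. -/
def PrimMA (m : (List Y →₀ K) →ₗ[K] (List Y →₀ K) →ₗ[K] (List Y →₀ K))
    (p : MonoidAlgebra K (FreeMonoid Y)) : Prop :=
  ∀ u v : List Y,
    ((m (word u) (word v)).sum fun w a => a * p.coeff (FreeMonoid.ofList w)) =
      (if v = [] then p.coeff (FreeMonoid.ofList u) else 0) +
      (if u = [] then p.coeff (FreeMonoid.ofList v) else 0)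


section AuxHelpers
set_option linter.unusedSectionVars false

variable {φ : Y → Y → (Y →₀ K)}
variable {m : (List Y →₀ K) →ₗ[K] (List Y →₀ K) →ₗ[K] (List Y →₀ K)}

lemma word_apply (v w : List Y) : (word v : List Y →₀ K) w = if v = w then 1 else 0 :=
  Finsupp.single_apply

lemma consL_apply_nil (a : Y) (P : List Y →₀ K) : consL a P ([] : List Y) = 0 := by
  rw [consL, Finsupp.lmapDomain_apply]
  apply Finsupp.mapDomain_notin_range
  rintro ⟨r, hr⟩
  exact List.cons_ne_nil a r hr

lemma consL_apply_cons (a z : Y) (P : List Y →₀ K) (l : List Y) :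
    consL a P (z :: l) = if a = z then P l else 0 := by
  rw [consL, Finsupp.lmapDomain_apply]
  by_cases h : a = z
  · subst h
    rw [if_pos rfl]
    exact Finsupp.mapDomain_apply (List.cons_injective) P l
  · rw [if_neg h]
    apply Finsupp.mapDomain_notin_range
    rintro ⟨r, hr⟩
    exact h (List.head_eq_of_cons_eq hr)

lemma mrec (hm : IsPhiShuffle φ m) (a b : Y) (u v w : List Y) :
    (m (word (a :: u)) (word (b :: v))) w =
      consL a (m (word u) (word (b :: v))) w + consL b (m (word (a :: u)) (word v)) w +
      (φ a b).sum fun c k => k * consL c (m (word u) (word v)) w := by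
  rw [hm.2.2]
  rw [Finsupp.add_apply, Finsupp.add_apply, Finsupp.sum_apply]
  refine congrArg _ (Finsupp.sum_congr fun c hc => ?_)
  rw [Finsupp.smul_apply, smul_eq_mul]

lemma mA (hm : IsPhiShuffle φ m) (u v : List Y) :
    (m (word u) (word v)) ([] : List Y) = if u = [] ∧ v = [] then 1 else 0 := by
  match u, v with
  | [], v =>
    rw [hm.1, word_apply]
    by_cases hv : v = []
    · simp [hv]
    · simp [hv, Ne.symm hv]
  | a :: u, [] => rw [hm.2.1, word_apply]; simp
  | a :: u, b :: v =>
    rw [mrec hm]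
    simp [consL_apply_nil]

lemma m_expand (u : List Y) (P : List Y →₀ K) (l : List Y) :
    (m (word u) P) l = P.sum fun v c => c * (m (word u) (word v)) l := by
  conv_lhs => rw [← Finsupp.sum_single P]
  rw [map_finsuppSum, Finsupp.sum_apply]
  refine Finsupp.sum_congr fun v hv => ?_
  rw [show (Finsupp.single v (P v) : List Y →₀ K) = (P v) • word v by
        rw [word, Finsupp.smul_single, smul_eq_mul, mul_one],
    map_smul, Finsupp.smul_apply, smul_eq_mul]

lemma take_drop_eq_iff {v s t : List Y} {j : ℕ} (hj : j ≤ v.length) :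
    (v.take j = s ∧ v.drop j = t) ↔ (v = s ++ t ∧ j = s.length) := by
  constructor
  · rintro ⟨rfl, rfl⟩
    refine ⟨(List.take_append_drop j v).symm, ?_⟩
    rw [List.length_take, min_eq_left hj]
  · rintro ⟨rfl, rfl⟩
    exact ⟨List.take_left, List.drop_left⟩

lemma sum_split (v s t : List Y) :
    (∑ j ∈ Finset.range (v.length + 1),
      (if v.take j = s then (1:K) else 0) * (if v.drop j = t then 1 else 0)) =
      if v = s ++ t then 1 else 0 := by
  have h : ∀ j ∈ Finset.range (v.length + 1),
      (if v.take j = s then (1:K) else 0) * (if v.drop j = t then 1 else 0) =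
      if v = s ++ t then (if j = s.length then 1 else 0) else 0 := by
    intro j hj
    rw [Finset.mem_range, Nat.lt_succ_iff] at hj
    by_cases h1 : v.take j = s ∧ v.drop j = t
    · have h2 := (take_drop_eq_iff hj).1 h1
      rw [if_pos h1.1, if_pos h1.2, if_pos h2.1, if_pos h2.2, one_mul]
    · have h2 : ¬ (v = s ++ t ∧ j = s.length) := fun hc => h1 ((take_drop_eq_iff hj).2 hc)
      have hrhs : (if v = s ++ t then (if j = s.length then (1:K) else 0) else 0) = 0 := by
        by_cases hv : v = s ++ t
        · rw [if_pos hv, if_neg fun hj2 => h2 ⟨hv, hj2⟩]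
        · rw [if_neg hv]
      rw [hrhs]
      rcases not_and_or.1 h1 with ht | hd
      · rw [if_neg ht, zero_mul]
      · rw [if_neg hd, mul_zero]
  rw [Finset.sum_congr rfl h]
  by_cases hv : v = s ++ t
  · simp only [if_pos hv]
    rw [Finset.sum_ite_eq' (Finset.range (v.length + 1)) s.length (fun _ => (1:K))]
    rw [if_pos]
    rw [Finset.mem_range, Nat.lt_succ_iff, hv, List.length_append]
    exact Nat.le_add_right _ _
  · simp [hv]

lemma fsum_pick (f : Y →₀ K) (z : Y) (W : K) :
    (f.sum fun c k => k * if c = z then W else 0) = f z * W := by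
  have h : (fun (c : Y) (k : K) => k * if c = z then W else 0) =
      fun c k => if c = z then k * W else 0 := by
    funext c k; by_cases h : c = z <;> simp [h]
  rw [h, Finsupp.sum_ite_eq' f z fun _ k => k * W]
  by_cases hz : z ∈ f.support
  · rw [if_pos hz]
  · rw [if_neg hz, Finsupp.notMem_support_iff.1 hz, zero_mul]

lemma word_nil_cons (z : Y) (B : List Y) : (word [] : List Y →₀ K) (z :: B) = 0 := by
  rw [word_apply, if_neg]; exact fun h => nomatch h

lemma word_cons_nil (a : Y) (A : List Y) : (word (a :: A) : List Y →₀ K) [] = 0 := by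
  rw [word_apply, if_neg]; exact fun h => nomatch h

lemma word_nil_nil : (word [] : List Y →₀ K) [] = 1 := by
  rw [word_apply, if_pos rfl]

lemma word_cons (a z : Y) (A B : List Y) :
    (word (a :: A) : List Y →₀ K) (z :: B) =
      if a = z then (word A : List Y →₀ K) B else 0 := by
  rw [word_apply, word_apply]
  by_cases h : a = z
  · subst h
    by_cases h2 : A = B
    · simp [h2]
    · simp [h2, fun hc : a :: A = a :: B => h2 (List.tail_eq_of_cons_eq hc)]
  · rw [if_neg h, if_neg fun hc => h (List.head_eq_of_cons_eq hc)]

lemma word_split (v s t : List Y) :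
    (word v : List Y →₀ K) (s ++ t) =
      ∑ j ∈ Finset.range (v.length + 1),
        (word (v.take j) : List Y →₀ K) s * (word (v.drop j) : List Y →₀ K) t := by
  simp only [word_apply]
  exact (sum_split v s t).symm

lemma mxz (hm : IsPhiShuffle φ m) (x b z : Y) (V r : List Y) :
    (m (word [x]) (word (b :: V))) (z :: r) =
      (if x = z then (word (b :: V) : List Y →₀ K) r else 0) +
      (if b = z then (m (word [x]) (word V)) r else 0) +
      φ x b z * (word V : List Y →₀ K) r := by
  rw [mrec hm x b [] V (z :: r), hm.1, consL_apply_cons, consL_apply_cons]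
  have h : (fun (c : Y) (k : K) => k * consL c (m (word ([] : List Y)) (word V)) (z :: r)) =
      fun c k => k * if c = z then (word V : List Y →₀ K) r else 0 := by
    funext c k
    rw [consL_apply_cons, hm.1]
  rw [h, fsum_pick]

lemma m_nil_coeff (hm : IsPhiShuffle φ m) (x : Y) (V : List Y) :
    (m (word [x]) (word V)) ([] : List Y) = 0 := by
  rw [mA hm]
  simp

lemma K1x (hm : IsPhiShuffle φ m) (x : Y) (v s t : List Y) :
    (m (word [x]) (word v)) (s ++ t) =
      ∑ j ∈ Finset.range (v.length + 1),
        ((word (v.take j) : List Y →₀ K) s * (m (word [x]) (word (v.drop j))) t +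
         (m (word [x]) (word (v.take j))) s * (word (v.drop j) : List Y →₀ K) t) := by
  induction v generalizing s t with
  | nil =>
    simp only [List.length_nil, Nat.zero_add]
    rw [Finset.sum_range_one]
    simp only [List.take_nil, List.drop_nil, hm.2.1]
    cases s with
    | nil => simp [word_nil_nil, word_apply]
    | cons z s' =>
      rw [word_nil_cons, zero_mul, zero_add, List.cons_append, word_cons, word_cons]
      by_cases hxz : x = z <;>
        simp [hxz, word_apply, ite_zero_mul_ite_zero, List.append_eq_nil_iff, eq_comm,
          ite_and, and_comm]
  | cons b v' IH =>
    cases s with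
    | nil =>
      rw [List.nil_append]
      simp only [List.length_cons]
      rw [Finset.sum_range_succ']
      simp only [List.take_succ_cons, List.drop_succ_cons, List.take_zero, List.drop_zero]
      have h0 : ∀ j ∈ Finset.range (v'.length + 1),
          ((word (b :: v'.take j) : List Y →₀ K) [] * (m (word [x])) (word (v'.drop j)) t +
           (m (word [x])) (word (b :: v'.take j)) [] *
             (word (v'.drop j) : List Y →₀ K) t) = 0 := by
        intro j hj
        rw [word_cons_nil, zero_mul, m_nil_coeff hm, zero_mul, add_zero]
      rw [Finset.sum_congr rfl h0, Finset.sum_const_zero, zero_add, word_nil_nil, one_mul,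
        hm.2.1, word_cons_nil, zero_mul, add_zero]
    | cons z s' =>
      rw [List.cons_append, mxz hm]
      simp only [List.length_cons]
      rw [Finset.sum_range_succ']
      simp only [List.take_succ_cons, List.drop_succ_cons, List.take_zero, List.drop_zero]
      rw [hm.2.1, word_cons, word_nil_cons, zero_mul, zero_add]
      have hsummand : ∀ j ∈ Finset.range (v'.length + 1),
          ((word (b :: v'.take j) : List Y →₀ K) (z :: s') *
             (m (word [x])) (word (v'.drop j)) t +
           (m (word [x])) (word (b :: v'.take j)) (z :: s') *
             (word (v'.drop j) : List Y →₀ K) t) =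
          ((if b = z then (word (v'.take j) : List Y →₀ K) s' else 0) *
             (m (word [x])) (word (v'.drop j)) t +
           (((if x = z then (word (b :: v'.take j) : List Y →₀ K) s' else 0) +
             (if b = z then (m (word [x])) (word (v'.take j)) s' else 0) +
             φ x b z * (word (v'.take j) : List Y →₀ K) s') *
             (word (v'.drop j) : List Y →₀ K) t)) := by
        intro j hj
        rw [word_cons, mxz hm]
      rw [Finset.sum_congr rfl hsummand]
      have hw : (word (b :: v') : List Y →₀ K) (s' ++ t) =
          (∑ j ∈ Finset.range (v'.length + 1),
            (word (b :: v'.take j) : List Y →₀ K) s' *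
              (word (v'.drop j) : List Y →₀ K) t) +
          (word ([] : List Y) : List Y →₀ K) s' * (word (b :: v') : List Y →₀ K) t := by
        rw [word_split (b :: v') s' t]
        simp only [List.length_cons]
        rw [Finset.sum_range_succ']
        simp only [List.take_succ_cons, List.drop_succ_cons, List.take_zero, List.drop_zero]
      rw [IH s' t, word_split v' s' t, hw]
      by_cases hxz : x = z
      · subst hxz
        by_cases hbz : b = x
        · subst hbz
          simp only [eq_self_iff_true, if_true]
          simp only [Finset.sum_add_distrib, add_mul, Finset.mul_sum, mul_assoc]
          try ring
        · simp only [hbz, if_false, eq_self_iff_true, if_true]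
          simp only [Finset.sum_add_distrib, add_mul, Finset.mul_sum, mul_assoc,
            zero_mul, mul_zero, zero_add, add_zero, Finset.sum_const_zero]
          try ring
      · by_cases hbz : b = z
        · subst hbz
          simp only [hxz, if_false, eq_self_iff_true, if_true]
          simp only [Finset.sum_add_distrib, add_mul, Finset.mul_sum, mul_assoc,
            zero_mul, mul_zero, zero_add, add_zero, Finset.sum_const_zero]
          try ring
        · simp only [hxz, hbz, if_false]
          simp only [Finset.sum_add_distrib, add_mul, Finset.mul_sum, mul_assoc,
            zero_mul, mul_zero, zero_add, add_zero, Finset.sum_const_zero]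
          try ring

lemma fsum_pick' {α : Type*} [DecidableEq α] (f : α →₀ K) (z : α) (W : K) :
    (f.sum fun c k => k * if c = z then W else 0) = f z * W := by
  have h : (fun (c : α) (k : K) => k * if c = z then W else 0) =
      fun c k => if c = z then k * W else 0 := by
    funext c k; by_cases h : c = z <;> simp [h]
  rw [h, Finsupp.sum_ite_eq' f z fun _ k => k * W]
  by_cases hz : z ∈ f.support
  · rw [if_pos hz]
  · rw [if_neg hz, Finsupp.notMem_support_iff.1 hz, zero_mul]

lemma prefix_pick (v s : List Y) (g : List Y → K) :
    (∑ j ∈ Finset.range (v.length + 1), (if v.take j = s then (1:K) else 0) * g (v.drop j))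
      = if s <+: v then g (v.drop s.length) else 0 := by
  have h : ∀ j ∈ Finset.range (v.length + 1),
      (if v.take j = s then (1:K) else 0) * g (v.drop j) =
      if j = s.length then (if s <+: v then g (v.drop s.length) else 0) else 0 := by
    intro j hj
    rw [Finset.mem_range, Nat.lt_succ_iff] at hj
    by_cases hts : v.take j = s
    · have hj' : j = s.length := by rw [← hts, List.length_take, min_eq_left hj]
      have hpre : s <+: v := List.prefix_iff_eq_take.2 (by rw [← hj']; exact hts.symm)
      subst hj'
      rw [if_pos hts, one_mul, if_pos rfl, if_pos hpre]
    · rw [if_neg hts, zero_mul]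
      by_cases hj' : j = s.length
      · subst hj'
        by_cases hpre : s <+: v
        · exact absurd (List.prefix_iff_eq_take.1 hpre).symm hts
        · rw [if_pos rfl, if_neg hpre]
      · rw [if_neg hj']
  rw [Finset.sum_congr rfl h,
    Finset.sum_ite_eq' (Finset.range (v.length + 1)) s.length
      (fun _ => if s <+: v then g (v.drop s.length) else 0)]
  by_cases hmem : s.length ∈ Finset.range (v.length + 1)
  · rw [if_pos hmem]
  · rw [if_neg hmem,
      if_neg (fun hpre : s <+: v => hmem (Finset.mem_range.2 (Nat.lt_succ_of_le hpre.length_le)))]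

lemma suffix_pick (v t : List Y) (g : List Y → K) :
    (∑ j ∈ Finset.range (v.length + 1), g (v.take j) * (if v.drop j = t then (1:K) else 0))
      = if t <:+ v then g (v.take (v.length - t.length)) else 0 := by
  have h : ∀ j ∈ Finset.range (v.length + 1),
      g (v.take j) * (if v.drop j = t then (1:K) else 0) =
      if j = v.length - t.length then
        (if t <:+ v then g (v.take (v.length - t.length)) else 0) else 0 := by
    intro j hj
    rw [Finset.mem_range, Nat.lt_succ_iff] at hj
    by_cases hts : v.drop j = t
    · have hlen : v.length - j = t.length := by rw [← hts, List.length_drop]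
      have hj' : j = v.length - t.length := by omega
      have hsuf : t <:+ v := List.suffix_iff_eq_drop.2 (by rw [← hj']; exact hts.symm)
      subst hj'
      rw [if_pos hts, mul_one, if_pos rfl, if_pos hsuf]
    · rw [if_neg hts, mul_zero]
      by_cases hj' : j = v.length - t.length
      · subst hj'
        by_cases hsuf : t <:+ v
        · exact absurd (List.suffix_iff_eq_drop.1 hsuf).symm hts
        · rw [if_pos rfl, if_neg hsuf]
      · rw [if_neg hj']
  rw [Finset.sum_congr rfl h,
    Finset.sum_ite_eq' (Finset.range (v.length + 1)) (v.length - t.length)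
      (fun _ => if t <:+ v then g (v.take (v.length - t.length)) else 0)]
  rw [if_pos (Finset.mem_range.2 (Nat.lt_succ_of_le (Nat.sub_le _ _)))]

/-- The φ-shuffle product of the letters of `w`. -/
def Sh (m : (List Y →₀ K) →ₗ[K] (List Y →₀ K) →ₗ[K] (List Y →₀ K)) :
    List Y → (List Y →₀ K) :=
  fun w => w.foldr (fun x acc => m (word [x]) acc) (word [])

lemma Sh_nil : Sh m ([] : List Y) = word [] := rfl

lemma Sh_cons (x : Y) (w : List Y) : Sh m (x :: w) = m (word [x]) (Sh m w) := rfl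

lemma Sh_coeff_nil (hm : IsPhiShuffle φ m) (w : List Y) :
    Sh m w ([] : List Y) = if w = [] then 1 else 0 := by
  cases w with
  | nil => rw [Sh_nil, word_nil_nil, if_pos rfl]
  | cons x w' =>
    rw [Sh_cons, m_expand, if_neg (List.cons_ne_nil x w')]
    refine Finset.sum_eq_zero fun v hv => ?_
    simp only [m_nil_coeff hm, mul_zero]

lemma m_single_letter (hm : IsPhiShuffle φ m) (x z b : Y) (v : List Y) :
    (m (word [x]) (word (b :: v))) [z] = if v = [] then φ x b z else 0 := by
  have h : ([z] : List Y) = z :: [] := rfl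
  rw [h, mxz hm, word_cons_nil, m_nil_coeff hm, word_apply]
  simp [mul_ite]

lemma Sh_letter (hm : IsPhiShuffle φ m) :
    ∀ (w : List Y), w ≠ [] → ∀ z : Y, Sh m w [z] = phiWord φ w z := by
  intro w
  induction w with
  | nil => intro h; exact absurd rfl h
  | cons x w' IH =>
    intro _ z
    cases w' with
    | nil =>
      rw [Sh_cons, Sh_nil, hm.2.1, word_apply]
      have hrfl : phiWord φ [x] = Finsupp.single x (1:K) := rfl
      rw [hrfl, Finsupp.single_apply]
      by_cases hxz : x = z
      · subst hxz; simp
      · rw [if_neg (fun h : [x] = [z] => hxz (List.head_eq_of_cons_eq h)), if_neg hxz]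
    | cons y w'' =>
      have hne : (y :: w'' : List Y) ≠ [] := List.cons_ne_nil y w''
      set f : List Y → K := fun v => match v with | [b] => φ x b z | _ => 0 with hf
      have hf1 : ∀ b : Y, f [b] = φ x b z := fun b => rfl
      have hf0 : f [] = 0 := rfl
      have hf2 : ∀ (b c : Y) (u : List Y), f (b :: c :: u) = 0 := fun _ _ _ => rfl
      rw [Sh_cons, m_expand]
      have hstep : (Sh m (y :: w'')).sum (fun v c => c * (m (word [x]) (word v)) [z]) =
          (Sh m (y :: w'')).support.sum fun v => Sh m (y :: w'') v * f v := by
        rw [Finsupp.sum]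
        refine Finset.sum_congr rfl fun v hv => ?_
        congr 1
        cases v with
        | nil =>
          exfalso
          apply Finsupp.mem_support_iff.1 hv
          rw [Sh_coeff_nil hm, if_neg hne]
        | cons b v' =>
          rw [m_single_letter hm]
          cases v' with
          | nil => rw [if_pos rfl, hf1 b]
          | cons c u => rw [if_neg (List.cons_ne_nil c u), hf2 b c u]
      rw [hstep]
      have hphi : phiWord φ (x :: y :: w'') z =
          (phiWord φ (y :: w'')).sum fun b k => k * φ x b z := by
        show (((phiWord φ (y :: w'')).sum fun b k => k • φ x b) : Y →₀ K) z = _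
        rw [Finsupp.sum_apply]
        exact Finsupp.sum_congr fun b hb => by rw [Finsupp.smul_apply, smul_eq_mul]
      have hQ : ∀ b : Y, phiWord φ (y :: w'') b = Sh m (y :: w'') [b] :=
        fun b => (IH hne b).symm
      rw [hphi, Finsupp.sum]
      set P := Sh m (y :: w'') with hP
      set A := P.support with hA
      set B := (phiWord φ (y :: w'')).support.image (fun b => [b]) with hB
      have hBsum : ((phiWord φ (y :: w'')).support.sum fun b => phiWord φ (y :: w'') b * φ x b z)
          = B.sum fun v => P v * f v := by
        rw [hB, Finset.sum_image (fun b _ c _ h => List.head_eq_of_cons_eq h)]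
        refine Finset.sum_congr rfl fun b hb => ?_
        rw [hf1 b, hQ b]
      rw [hBsum]
      have h1 : A.sum (fun v => P v * f v) = (A ∪ B).sum fun v => P v * f v := by
        refine Finset.sum_subset Finset.subset_union_left fun v hv hvn => ?_
        rw [Finsupp.notMem_support_iff.1 hvn, zero_mul]
      have h2 : B.sum (fun v => P v * f v) = (A ∪ B).sum fun v => P v * f v := by
        refine Finset.sum_subset Finset.subset_union_right fun v hv hvn => ?_
        cases v with
        | nil => rw [hf0, mul_zero]
        | cons b v' =>
          cases v' with
          | nil =>
            have hb : b ∉ (phiWord φ (y :: w'')).support := by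
              intro hb
              exact hvn (Finset.mem_image.2 ⟨b, hb, rfl⟩)
            rw [← hQ b, Finsupp.notMem_support_iff.1 hb, zero_mul]
          | cons c u => rw [hf2 b c u, mul_zero]
      rw [h1, ← h2]

/-- All ways of splitting the multiset of letters of `w` in two (ordered) parts. -/
def splitsL : List Y → List (List Y × List Y)
  | [] => [([], [])]
  | x :: w => (splitsL w).flatMap fun p => [(x :: p.1, p.2), (p.1, x :: p.2)]

lemma splitsL_len : ∀ (w : List Y) (p : List Y × List Y), p ∈ splitsL w →
    p.1.length + p.2.length = w.length := by
  intro w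
  induction w with
  | nil => intro p hp; simp [splitsL] at hp; simp [hp]
  | cons x w' IH =>
    intro p hp
    simp only [splitsL, List.mem_flatMap] at hp
    obtain ⟨q, hq, hpq⟩ := hp
    have := IH q hq
    rw [List.mem_cons, List.mem_singleton] at hpq
    rcases hpq with rfl | rfl
    · simp; omega
    · simp; omega

lemma list_sum_add {α : Type*} (L : List α) (F G : α → K) :
    ((L.map fun p => F p + G p).sum) = (L.map F).sum + (L.map G).sum := by
  induction L with
  | nil => simp
  | cons p L' IH => simp [IH]; ring

lemma sum_map_flatMap_pair {α β : Type*} (L : List α) (g h : α → β) (F : β → K) :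
    (((L.flatMap fun p => [g p, h p]).map F).sum) = (L.map fun p => F (g p) + F (h p)).sum := by
  induction L with
  | nil => simp
  | cons p L' IH => simp [IH]; ring

lemma list_finsupp_sum_apply (L : List (List Y →₀ K)) (r : List Y) :
    (L.sum) r = (L.map fun f => f r).sum := by
  induction L with
  | nil => simp
  | cons f L' IH => simp [IH]

lemma map_list_finsupp_sum (f : (List Y →₀ K) →ₗ[K] (List Y →₀ K))
    (L : List (List Y →₀ K)) : f L.sum = (L.map f).sum := by
  induction L with
  | nil => simp
  | cons g L' IH => simp [IH]

lemma ite_word_apply (c : Prop) [Decidable c] (X : List Y →₀ K) (r : List Y) :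
    (if c then X else 0) r = if c then X r else 0 := by
  split <;> simp

lemma wv_apply (v s r : List Y) :
    (if s <+: v then (word (v.drop s.length) : List Y →₀ K) r else 0) =
      if v = s ++ r then 1 else 0 := by
  by_cases hp : s <+: v
  · rw [if_pos hp, word_apply]
    have hiff : (v.drop s.length = r) ↔ (v = s ++ r) := by
      constructor
      · intro h
        conv_lhs => rw [← List.take_append_drop s.length v]
        rw [h, ← List.prefix_iff_eq_take.1 hp]
      · rintro rfl
        exact List.drop_left
    simp only [hiff]
  · rw [if_neg hp,
      if_neg fun hc : v = s ++ r => hp (hc.symm ▸ List.prefix_append s r), eq_comm]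

lemma wv'_apply (v t r : List Y) :
    (if t <:+ v then (word (v.take (v.length - t.length)) : List Y →₀ K) r else 0) =
      if v = r ++ t then 1 else 0 := by
  by_cases hp : t <:+ v
  · rw [if_pos hp, word_apply]
    have hiff : (v.take (v.length - t.length) = r) ↔ (v = r ++ t) := by
      constructor
      · intro h
        conv_lhs => rw [← List.take_append_drop (v.length - t.length) v]
        rw [h, ← List.suffix_iff_eq_drop.1 hp]
      · rintro rfl
        have hl : (r ++ t).length - t.length = r.length := by
          rw [List.length_append]; omega
        rw [hl]
        exact List.take_left
    simp only [hiff]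
  · rw [if_neg hp]
    rw [if_neg fun hc : v = r ++ t => hp (hc.symm ▸ List.suffix_append r t), eq_comm]

lemma K2pt (hm : IsPhiShuffle φ m) :
    ∀ (w s t : List Y),
      Sh m w (s ++ t) = ((splitsL w).map fun p => Sh m p.1 s * Sh m p.2 t).sum := by
  intro w
  induction w with
  | nil =>
    intro s t
    show (word [] : List Y →₀ K) (s ++ t) = (word [] : List Y →₀ K) s * (word []) t + 0
    rw [add_zero]
    cases s with
    | nil => rw [List.nil_append, word_nil_nil, one_mul]
    | cons z s' => rw [List.cons_append, word_nil_cons, word_nil_cons, zero_mul]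
  | cons x w' IH =>
    intro s t
    have hexp : Sh m (x :: w') (s ++ t) =
        ((Sh m w').sum fun v c =>
          c * (if s <+: v then (m (word [x]) (word (v.drop s.length))) t else 0)) +
        ((Sh m w').sum fun v c =>
          c * (if t <:+ v then (m (word [x]) (word (v.take (v.length - t.length)))) s else 0)) := by
      rw [Sh_cons, m_expand, ← Finsupp.sum_add]
      refine Finsupp.sum_congr fun v hv => ?_
      rw [← mul_add]
      congr 1
      rw [K1x hm, Finset.sum_add_distrib]
      congr 1
      · rw [← prefix_pick v s fun r => (m (word [x]) (word r)) t]
        exact Finset.sum_congr rfl fun j hj => by rw [word_apply]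
      · rw [← suffix_pick v t fun r => (m (word [x]) (word r)) s]
        exact Finset.sum_congr rfl fun j hj => by rw [word_apply]
    rw [hexp]
    -- Part 1
    have hpart1 : ((Sh m w').sum fun v c =>
          c * (if s <+: v then (m (word [x]) (word (v.drop s.length))) t else 0)) =
        ((splitsL w').map fun p => Sh m p.1 s * Sh m (x :: p.2) t).sum := by
      have hR : ((Sh m w').sum fun v c =>
            c • (if s <+: v then word (v.drop s.length) else 0) : List Y →₀ K) =
          ((splitsL w').map fun p => (Sh m p.1 s) • Sh m p.2).sum := by
        ext r
        rw [Finsupp.sum_apply]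
        have : ((Sh m w').sum fun v c =>
            (c • (if s <+: v then (word (v.drop s.length) : List Y →₀ K) else 0)) r) =
            (Sh m w').sum fun v c => c * if v = s ++ r then 1 else 0 := by
          refine Finsupp.sum_congr fun v hv => ?_
          rw [Finsupp.smul_apply, smul_eq_mul, ite_word_apply, wv_apply]
        rw [this, fsum_pick' (Sh m w') (s ++ r) 1, mul_one, IH s r,
          list_finsupp_sum_apply, List.map_map]
        refine congrArg List.sum (List.map_congr_left fun p hp => ?_)
        simp
      calc ((Sh m w').sum fun v c =>
            c * (if s <+: v then (m (word [x]) (word (v.drop s.length))) t else 0)) =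
          (m (word [x]) ((Sh m w').sum fun v c =>
            c • (if s <+: v then word (v.drop s.length) else 0))) t := by
            rw [map_finsuppSum, Finsupp.sum_apply]
            refine Finsupp.sum_congr fun v hv => ?_
            rw [map_smul, Finsupp.smul_apply, smul_eq_mul]
            congr 1
            rw [apply_ite (m (word [x])), map_zero, ite_word_apply]
        _ = ((splitsL w').map fun p => Sh m p.1 s * Sh m (x :: p.2) t).sum := by
            rw [hR, map_list_finsupp_sum (m (word [x])), List.map_map,
              list_finsupp_sum_apply, List.map_map]
            refine congrArg List.sum (List.map_congr_left fun p hp => ?_)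
            simp [Sh_cons]
    -- Part 2
    have hpart2 : ((Sh m w').sum fun v c =>
          c * (if t <:+ v then (m (word [x]) (word (v.take (v.length - t.length)))) s else 0)) =
        ((splitsL w').map fun p => Sh m (x :: p.1) s * Sh m p.2 t).sum := by
      have hR : ((Sh m w').sum fun v c =>
            c • (if t <:+ v then word (v.take (v.length - t.length)) else 0) : List Y →₀ K) =
          ((splitsL w').map fun p => (Sh m p.2 t) • Sh m p.1).sum := by
        ext r
        rw [Finsupp.sum_apply]
        have : ((Sh m w').sum fun v c =>
            (c • (if t <:+ v then (word (v.take (v.length - t.length)) : List Y →₀ K) else 0)) r) =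
            (Sh m w').sum fun v c => c * if v = r ++ t then 1 else 0 := by
          refine Finsupp.sum_congr fun v hv => ?_
          rw [Finsupp.smul_apply, smul_eq_mul, ite_word_apply, wv'_apply]
        rw [this, fsum_pick' (Sh m w') (r ++ t) 1, mul_one, IH r t,
          list_finsupp_sum_apply, List.map_map]
        refine congrArg List.sum (List.map_congr_left fun p hp => ?_)
        simp [mul_comm]
      calc ((Sh m w').sum fun v c =>
            c * (if t <:+ v then (m (word [x]) (word (v.take (v.length - t.length)))) s else 0)) =
          (m (word [x]) ((Sh m w').sum fun v c =>
            c • (if t <:+ v then word (v.take (v.length - t.length)) else 0))) s := by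
            rw [map_finsuppSum, Finsupp.sum_apply]
            refine Finsupp.sum_congr fun v hv => ?_
            rw [map_smul, Finsupp.smul_apply, smul_eq_mul]
            congr 1
            rw [apply_ite (m (word [x])), map_zero, ite_word_apply]
        _ = ((splitsL w').map fun p => Sh m (x :: p.1) s * Sh m p.2 t).sum := by
            rw [hR, map_list_finsupp_sum (m (word [x])), List.map_map,
              list_finsupp_sum_apply, List.map_map]
            refine congrArg List.sum (List.map_congr_left fun p hp => ?_)
            simp [Sh_cons, mul_comm]
    rw [hpart1, hpart2]
    show _ = ((((splitsL w').flatMap fun p => [(x :: p.1, p.2), (p.1, x :: p.2)]).map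
      fun p => Sh m p.1 s * Sh m p.2 t).sum)
    rw [sum_map_flatMap_pair (splitsL w') (fun p => (x :: p.1, p.2)) (fun p => (p.1, x :: p.2))
      (fun p => Sh m p.1 s * Sh m p.2 t), list_sum_add]
    have e1 : ((splitsL w').map fun p =>
        (fun q : List Y × List Y => Sh m q.1 s * Sh m q.2 t) ((x :: p.1, p.2))).sum =
        ((splitsL w').map fun p => Sh m (x :: p.1) s * Sh m p.2 t).sum :=
      congrArg List.sum (List.map_congr_left fun p _ => rfl)
    have e2 : ((splitsL w').map fun p =>
        (fun q : List Y × List Y => Sh m q.1 s * Sh m q.2 t) ((p.1, x :: p.2))).sum =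
        ((splitsL w').map fun p => Sh m p.1 s * Sh m (x :: p.2) t).sum :=
      congrArg List.sum (List.map_congr_left fun p _ => rfl)
    rw [e1, e2, add_comm]

local instance : DecidableEq (FreeMonoid Y) := inferInstanceAs (DecidableEq (List Y))

lemma list_sum_mul_const {β : Type*} (L : List β) (F : β → K) (c : K) :
    c * (L.map F).sum = (L.map fun x => c * F x).sum := by
  induction L with
  | nil => simp
  | cons x L' IH => simp [mul_add, IH]

lemma fsum_listsum {α β : Type*} (f : α →₀ K) (L : List β) (g : α → K → β → K) :
    (f.sum fun a b => (L.map (g a b)).sum) =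
      (L.map fun x => f.sum fun a b => g a b x).sum := by
  induction L with
  | nil => simp
  | cons x L' IH =>
    simp only [List.map_cons, List.sum_cons]
    rw [← IH, ← Finsupp.sum_add]

/-- Pairing of a noncommutative polynomial with an element of `K⟨Y⟩`. -/
def pairW (p : MonoidAlgebra K (FreeMonoid Y)) (P : List Y →₀ K) : K :=
  P.sum fun w a => a * p.coeff (FreeMonoid.ofList w)

lemma pairW_zero_left (P : List Y →₀ K) : pairW (0 : MonoidAlgebra K (FreeMonoid Y)) P = 0 := by
  unfold pairW
  simp

lemma pairW_add_left (p q : MonoidAlgebra K (FreeMonoid Y)) (P : List Y →₀ K) :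
    pairW (p + q) P = pairW p P + pairW q P := by
  unfold pairW
  rw [← Finsupp.sum_add]
  refine Finsupp.sum_congr fun w hw => ?_
  rw [MonoidAlgebra.coeff_add, Finsupp.add_apply, mul_add]

lemma pairW_single (g : FreeMonoid Y) (c : K) (P : List Y →₀ K) :
    pairW (MonoidAlgebra.single g c) P = P (FreeMonoid.toList g) * c := by
  unfold pairW
  have h : (fun (w : List Y) (a : K) => a * (MonoidAlgebra.single g c).coeff (FreeMonoid.ofList w)) =
      fun w a => a * if w = FreeMonoid.toList g then c else 0 := by
    funext w a
    rw [MonoidAlgebra.coeff_single, Finsupp.single_apply]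
    congr 1
    by_cases hgw : g = FreeMonoid.ofList w
    · rw [if_pos hgw, if_pos]
      rw [hgw]
      rfl
    · rw [if_neg hgw, if_neg]
      intro hc
      exact hgw (by rw [hc]; rfl)
  rw [h, fsum_pick' P (FreeMonoid.toList g) c]

/-- The same pairing computed by summing over the polynomial instead. -/
lemma pairW_comm (p : MonoidAlgebra K (FreeMonoid Y)) (P : List Y →₀ K) :
    pairW p P = p.coeff.sum fun g c => c * P (FreeMonoid.toList g) := by
  induction p using MonoidAlgebra.induction with
  | zero => rw [pairW_zero_left, MonoidAlgebra.coeff_zero, Finsupp.sum_zero_index]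
  | single_add g c p hg hc IH =>
    rw [pairW_add_left, MonoidAlgebra.coeff_add, Finsupp.sum_add_index, IH, pairW_single,
      MonoidAlgebra.coeff_single]
    · rw [Finsupp.sum_single_index, mul_comm]
      rw [zero_mul]
    · intro a ha; rw [zero_mul]
    · intro a ha b₁ b₂; rw [add_mul]

lemma pairW_mul (hm : IsPhiShuffle φ m) (p q : MonoidAlgebra K (FreeMonoid Y)) (w : List Y) :
    pairW (p * q) (Sh m w) =
      ((splitsL w).map fun pr => pairW p (Sh m pr.1) * pairW q (Sh m pr.2)).sum := by
  rw [pairW_comm, MonoidAlgebra.mul_def]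
  have h1 : ((p.coeff.sum fun a₁ b₁ => q.coeff.sum fun a₂ b₂ =>
        MonoidAlgebra.single (a₁ * a₂) (b₁ * b₂)).coeff.sum fun g c => c * Sh m w (FreeMonoid.toList g)) =
      p.coeff.sum fun a₁ b₁ => q.coeff.sum fun a₂ b₂ =>
        (b₁ * b₂) * Sh m w (FreeMonoid.toList a₁ ++ FreeMonoid.toList a₂) := by
    simp only [MonoidAlgebra.coeff_finsuppSum, MonoidAlgebra.coeff_single]
    rw [Finsupp.sum_sum_index]
    · refine Finsupp.sum_congr fun a₁ ha₁ => ?_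
      rw [Finsupp.sum_sum_index]
      · refine Finsupp.sum_congr fun a₂ ha₂ => ?_
        rw [Finsupp.sum_single_index]
        · rw [FreeMonoid.toList_mul]
        · rw [zero_mul]
      · intro a; rw [zero_mul]
      · intro a b₁ b₂; rw [add_mul]
    · intro a; rw [zero_mul]
    · intro a b₁ b₂; rw [add_mul]
  rw [h1]
  have h2 : (p.coeff.sum fun a₁ b₁ => q.coeff.sum fun a₂ b₂ =>
        (b₁ * b₂) * Sh m w (FreeMonoid.toList a₁ ++ FreeMonoid.toList a₂)) =
      p.coeff.sum fun a₁ b₁ => q.coeff.sum fun a₂ b₂ => ((splitsL w).map fun pr =>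
        (b₁ * Sh m pr.1 (FreeMonoid.toList a₁)) *
          (b₂ * Sh m pr.2 (FreeMonoid.toList a₂))).sum := by
    refine Finsupp.sum_congr fun a₁ ha₁ => Finsupp.sum_congr fun a₂ ha₂ => ?_
    rw [K2pt hm w (FreeMonoid.toList a₁) (FreeMonoid.toList a₂), list_sum_mul_const]
    refine congrArg List.sum (List.map_congr_left fun pr hpr => ?_)
    ring
  rw [h2]
  have h3 : (p.coeff.sum fun a₁ b₁ => q.coeff.sum fun a₂ b₂ => ((splitsL w).map fun pr =>
        (b₁ * Sh m pr.1 (FreeMonoid.toList a₁)) *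
          (b₂ * Sh m pr.2 (FreeMonoid.toList a₂))).sum) =
      ((splitsL w).map fun pr => p.coeff.sum fun a₁ b₁ => q.coeff.sum fun a₂ b₂ =>
        (b₁ * Sh m pr.1 (FreeMonoid.toList a₁)) *
          (b₂ * Sh m pr.2 (FreeMonoid.toList a₂))).sum := by
    rw [← fsum_listsum]
    refine Finsupp.sum_congr fun a₁ ha₁ => ?_
    rw [← fsum_listsum]
  rw [h3]
  refine congrArg List.sum (List.map_congr_left fun pr hpr => ?_)
  rw [pairW_comm p, pairW_comm q, Finsupp.sum_mul]
  refine Finsupp.sum_congr fun a₁ ha₁ => ?_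
  rw [Finsupp.mul_sum]

/-- Bounded vanishing of pairings against shuffles of letters. -/
def GoodB (m : (List Y →₀ K) →ₗ[K] (List Y →₀ K) →ₗ[K] (List Y →₀ K))
    (p : MonoidAlgebra K (FreeMonoid Y)) : Prop :=
  ∃ N : ℕ, ∀ w : List Y, N < w.length → pairW p (Sh m w) = 0

lemma goodB_single_one (hm : IsPhiShuffle φ m) (r : K) :
    GoodB m (MonoidAlgebra.single (1 : FreeMonoid Y) r) := by
  refine ⟨0, fun w hw => ?_⟩
  rw [pairW_single, FreeMonoid.toList_one, Sh_coeff_nil hm,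
    if_neg (by intro h; subst h; simp at hw), zero_mul]

lemma goodB_algebraMap (hm : IsPhiShuffle φ m) (r : K) :
    GoodB m (algebraMap K (MonoidAlgebra K (FreeMonoid Y)) r) := by
  have h : algebraMap K (MonoidAlgebra K (FreeMonoid Y)) r =
      MonoidAlgebra.single (1 : FreeMonoid Y) r := rfl
  rw [h]
  exact goodB_single_one hm r

lemma goodB_add (p q : MonoidAlgebra K (FreeMonoid Y)) (hp : GoodB m p) (hq : GoodB m q) :
    GoodB m (p + q) := by
  obtain ⟨Np, hNp⟩ := hp
  obtain ⟨Nq, hNq⟩ := hq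
  refine ⟨max Np Nq, fun w hw => ?_⟩
  rw [pairW_add_left, hNp w (lt_of_le_of_lt (le_max_left _ _) hw),
    hNq w (lt_of_le_of_lt (le_max_right _ _) hw), add_zero]

lemma goodB_mul (hm : IsPhiShuffle φ m) (p q : MonoidAlgebra K (FreeMonoid Y))
    (hp : GoodB m p) (hq : GoodB m q) : GoodB m (p * q) := by
  obtain ⟨Np, hNp⟩ := hp
  obtain ⟨Nq, hNq⟩ := hq
  refine ⟨Np + Nq, fun w hw => ?_⟩
  rw [pairW_mul hm]
  have h : ∀ pr ∈ splitsL w, pairW p (Sh m pr.1) * pairW q (Sh m pr.2) = 0 := by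
    intro pr hpr
    have hlen := splitsL_len w pr hpr
    by_cases h1 : Np < pr.1.length
    · rw [hNp pr.1 h1, zero_mul]
    · have h2 : Nq < pr.2.length := by omega
      rw [hNq pr.2 h2, mul_zero]
  rw [List.map_congr_left h]
  simp

lemma pairW_m_expand (p : MonoidAlgebra K (FreeMonoid Y)) (x : Y) (Q : List Y →₀ K) :
    pairW p (m (word [x]) Q) =
      Q.sum fun v c => c * pairW p (m (word [x]) (word v)) := by
  rw [pairW_comm]
  have h : (p.coeff.sum fun g c => c * (m (word [x]) Q) (FreeMonoid.toList g)) =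
      p.coeff.sum fun g c => Q.sum fun v d =>
        c * (d * (m (word [x]) (word v)) (FreeMonoid.toList g)) := by
    refine Finsupp.sum_congr fun g hg => ?_
    rw [m_expand, Finsupp.mul_sum]
  rw [h, Finsupp.sum_comm]
  refine Finsupp.sum_congr fun v hv => ?_
  rw [pairW_comm, Finsupp.mul_sum]
  refine Finsupp.sum_congr fun g hg => ?_
  ring

lemma goodB_prim (hm : IsPhiShuffle φ m) (p : MonoidAlgebra K (FreeMonoid Y))
    (hp : PrimMA m p) : GoodB m p := by
  refine ⟨1, fun w hw => ?_⟩
  cases w with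
  | nil => simp at hw
  | cons x w' =>
    have hw' : w' ≠ [] := by
      intro h
      subst h
      simp at hw
    rw [Sh_cons, pairW_m_expand]
    have h : ((Sh m w').sum fun v c => c * pairW p (m (word [x]) (word v))) =
        (Sh m w').sum fun v c => c * (if v = [] then p.coeff (FreeMonoid.ofList [x]) else 0) := by
      refine Finsupp.sum_congr fun v hv => ?_
      congr 1
      have hprim := hp [x] v
      rw [if_neg (List.cons_ne_nil x []), add_zero] at hprim
      exact hprim
    rw [h, fsum_pick' (Sh m w') ([] : List Y) (p.coeff (FreeMonoid.ofList [x]))]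
    rw [Sh_coeff_nil hm, if_neg hw', zero_mul]

lemma goodB_of_surjective (hm : IsPhiShuffle φ m)
    (L : LieSubalgebra K (MonoidAlgebra K (FreeMonoid Y)))
    (hL : (L : Set (MonoidAlgebra K (FreeMonoid Y))) = {p | PrimMA m p})
    (hsurj : Function.Surjective ⇑(UniversalEnvelopingAlgebra.lift K L.incl))
    (p : MonoidAlgebra K (FreeMonoid Y)) : GoodB m p := by
  obtain ⟨u, hu⟩ := hsurj p
  obtain ⟨tt, htt⟩ : ∃ tt, UniversalEnvelopingAlgebra.mkAlgHom K L tt = u :=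
    RingCon.mkₐ_surjective _ u
  subst hu
  rw [← htt]
  clear htt
  induction tt using TensorAlgebra.induction with
  | algebraMap r =>
    rw [AlgHom.commutes]
    have h : ((UniversalEnvelopingAlgebra.lift K) L.incl)
        ((algebraMap K (UniversalEnvelopingAlgebra K ↥L)) r) =
        algebraMap K (MonoidAlgebra K (FreeMonoid Y)) r :=
      AlgHom.commutes _ r
    rw [h]
    exact goodB_algebraMap hm r
  | ι x =>
    have h1 : UniversalEnvelopingAlgebra.mkAlgHom K L
        (TensorAlgebra.ι K x) = UniversalEnvelopingAlgebra.ι K x := rfl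
    rw [h1, UniversalEnvelopingAlgebra.lift_ι_apply]
    have hx : (L.incl x : MonoidAlgebra K (FreeMonoid Y)) ∈
        (L : Set (MonoidAlgebra K (FreeMonoid Y))) := x.2
    rw [hL] at hx
    exact goodB_prim hm _ hx
  | mul a b ha hb =>
    rw [map_mul, map_mul]
    exact goodB_mul hm _ _ ha hb
  | add a b ha hb =>
    rw [map_add, map_add]
    exact goodB_add _ _ ha hb

lemma phiWord_vanish (hm : IsPhiShuffle φ m)
    (L : LieSubalgebra K (MonoidAlgebra K (FreeMonoid Y)))
    (hL : (L : Set (MonoidAlgebra K (FreeMonoid Y))) = {p | PrimMA m p})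
    (hsurj : Function.Surjective ⇑(UniversalEnvelopingAlgebra.lift K L.incl))
    (y : Y) : ∃ N : ℕ, ∀ w : List Y, N < w.length → phiWord φ w y = 0 := by
  obtain ⟨N, hN⟩ := goodB_of_surjective hm L hL hsurj
    (MonoidAlgebra.single (FreeMonoid.ofList [y]) (1 : K))
  refine ⟨N, fun w hw => ?_⟩
  have hw0 : w ≠ [] := by
    intro h
    subst h
    simp at hw
  have h1 := hN w hw
  rw [pairW_single, mul_one] at h1
  rw [← Sh_letter hm w hw0 y]
  exact h1

lemma phiWord_level_finite (hdual : PhiDualizable φ) :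
    ∀ n : ℕ, ∀ z : Y, {w : List Y | w.length = n ∧ phiWord φ w z ≠ 0}.Finite := by
  intro n
  induction n with
  | zero =>
    intro z
    refine Set.Finite.subset (Set.finite_empty) fun w hw => ?_
    obtain ⟨h1, h2⟩ := hw
    rw [List.length_eq_zero_iff.1 h1] at h2
    have h0 : phiWord φ ([] : List Y) = 0 := rfl
    rw [h0, Finsupp.zero_apply] at h2
    exact absurd rfl h2
  | succ n IH =>
    intro z
    cases n with
    | zero =>
      refine Set.Finite.subset (Set.finite_singleton [z]) fun w hw => ?_
      obtain ⟨h1, h2⟩ := hw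
      obtain ⟨b, rfl⟩ := List.length_eq_one_iff.1 h1
      have hb : phiWord φ [b] z = Finsupp.single b (1:K) z := rfl
      rw [hb, Finsupp.single_apply] at h2
      by_cases hbz : b = z
      · rw [hbz]; rfl
      · rw [if_neg hbz] at h2; exact absurd rfl h2
    | succ k =>
      refine Set.Finite.subset
        (Set.Finite.biUnion (hdual z) fun pr _ =>
          Set.Finite.image (List.cons pr.1) (IH pr.2)) fun w hw => ?_
      obtain ⟨h1, h2⟩ := hw
      match w, h1 with
      | x :: y' :: w'', h1 =>
        have hphi : phiWord φ (x :: y' :: w'') z =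
            (phiWord φ (y' :: w'')).sum fun b k => k * φ x b z := by
          show (((phiWord φ (y' :: w'')).sum fun b k => k • φ x b) : Y →₀ K) z = _
          rw [Finsupp.sum_apply]
          exact Finsupp.sum_congr fun b hb => by rw [Finsupp.smul_apply, smul_eq_mul]
        rw [hphi, Finsupp.sum] at h2
        obtain ⟨b, hb, hbne⟩ := Finset.exists_ne_zero_of_sum_ne_zero h2
        have hb1 : phiWord φ (y' :: w'') b ≠ 0 := Finsupp.mem_support_iff.1 hb
        have hb2 : φ x b z ≠ 0 := by
          intro h0
          rw [h0, mul_zero] at hbne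
          exact hbne rfl
        refine Set.mem_biUnion (show ((x, b) : Y × Y) ∈ {pr : Y × Y | φ pr.1 pr.2 z ≠ 0}
          from hb2) ?_
        refine ⟨y' :: w'', ⟨?_, hb1⟩, rfl⟩
        simpa using h1

end AuxHelpers

/-- if `φ` is associative (and commutative, dualizable) and the
bialgebra `B_φ` is an enveloping bialgebra — i.e. the canonical morphism from the
universal enveloping algebra of its Lie algebra of primitive elements is
bijective — then `φ` is moderate. -/
theorem enveloping_implies_moderate (φ : Y → Y → (Y →₀ K))
    (m : (List Y →₀ K) →ₗ[K] (List Y →₀ K) →ₗ[K] (List Y →₀ K))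
    (hm : IsPhiShuffle φ m)
    (hassoc : PhiAssoc φ) (hcomm : PhiComm φ) (hdual : PhiDualizable φ)
    (L : LieSubalgebra K (MonoidAlgebra K (FreeMonoid Y)))
    (hL : (L : Set (MonoidAlgebra K (FreeMonoid Y))) = {p | PrimMA m p})
    (henv : Function.Bijective ⇑(UniversalEnvelopingAlgebra.lift K L.incl)) :
    PhiModerate φ := by
  intro y
  obtain ⟨N, hN⟩ := phiWord_vanish hm L hL henv.2 y
  refine Set.Finite.subset
    (Set.Finite.biUnion (Set.finite_Iio (N + 1))
      fun n _ => phiWord_level_finite hdual n y) fun w hw => ?_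
  obtain ⟨hw1, hw2⟩ := hw
  have hlen : w.length < N + 1 := by
    by_contra hc
    exact hw2 (hN w (by omega))
  exact Set.mem_biUnion hlen ⟨rfl, hw2⟩

end
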